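/- For any permutation σ ∈ S_n, #_1(σ²) ≥ 6·#(σ) − 3·#_1(σ) − 2n, where #_1 denotes the number of fixed points and # the number of cycles. -/

import Mathlib

open Finset
open scoped Classical

/-- The number of cycles of a permutation of `Fin n`, counting fixed points as
(singleton) cycles. -/
noncomputable def numCycles {n : ℕ} (σ : Equiv.Perm (Fin n)) : ℕ :=
  σ.cycleType.card + (Finset.univ.filter fun x => σ x = x).card

/-- The number of fixed points of `σ`. -/
noncomputable def numFixedPoints {n : ℕ} (σ : Equiv.Perm (Fin n)) : ℕ :=
  (Finset.univ.filter fun x => σ x = x).card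

/-- `#₁(σ²) ≥ 6·#(σ) − 3·#₁(σ) − 2n`. -/
theorem fixedPoints_sq_ge {n : ℕ} (σ : Equiv.Perm (Fin n)) :
    (6 : ℤ) * numCycles σ - 3 * numFixedPoints σ - 2 * n
      ≤ (numFixedPoints (σ * σ) : ℤ) := by
  classical
  set F : Finset (Fin n) := Finset.univ.filter fun x => σ x = x with hF
  set A : Finset (Fin n) := Finset.univ.filter fun x => (σ * σ) x = x with hA
  set B : Finset (Fin n) := A \ F with hB
  set m : ℕ := σ.cycleType.card with hm
  set S : ℕ := σ.cycleType.sum with hS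
  set T : Finset (Equiv.Perm (Fin n)) :=
    σ.cycleFactorsFinset.filter fun c => c.support.card = 2 with hT
  -- m = card of cycleFactorsFinset
  have hmcard : m = σ.cycleFactorsFinset.card := by
    simp [hm, Equiv.Perm.cycleType, Multiset.card_map]
  -- S = sum of support cards of cycle factors
  have hSsum : S = ∑ c ∈ σ.cycleFactorsFinset, c.support.card := by
    rw [hS, Equiv.Perm.cycleType]; rfl
  -- every cycle factor has support card ≥ 2
  have hge2 : ∀ c ∈ σ.cycleFactorsFinset, 2 ≤ c.support.card := fun c hc =>
    (Equiv.Perm.mem_cycleFactorsFinset_iff.mp hc).1.two_le_card_support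
  -- Step 1 : 3 * m ≤ S + T.card
  have h1 : 3 * m ≤ S + T.card := by
    have : ∑ c ∈ σ.cycleFactorsFinset, 3 ≤
        ∑ c ∈ σ.cycleFactorsFinset, (c.support.card + if c.support.card = 2 then 1 else 0) := by
      apply Finset.sum_le_sum
      intro c hc
      have := hge2 c hc
      split <;> omega
    rw [Finset.sum_add_distrib] at this
    have hcf : T.card = ∑ c ∈ σ.cycleFactorsFinset, (if c.support.card = 2 then 1 else 0) := by
      rw [hT, Finset.card_filter]
    rw [hmcard, hSsum, hcf]
    simpa [mul_comm] using this
  -- Step 2 : support of each 2-cycle factor lies in B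
  have hsub : ∀ c ∈ T, c.support ⊆ B := by
    intro c hc
    obtain ⟨hcmem, hc2⟩ := Finset.mem_filter.mp hc
    obtain ⟨hcyc, hagree⟩ := Equiv.Perm.mem_cycleFactorsFinset_iff.mp hcmem
    have hswap : c * c = 1 := by
      obtain ⟨a, b, hab, rfl⟩ := Equiv.Perm.card_support_eq_two.mp hc2
      exact Equiv.swap_mul_self a b
    intro x hx
    have hx' : c x ∈ c.support := Equiv.Perm.apply_mem_support.mpr hx
    have h1' : σ x = c x := (hagree x hx).symm
    have h2' : σ (c x) = c (c x) := (hagree (c x) hx').symm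
    have hcc : c (c x) = x := by
      have := congrArg (fun p => p x) hswap
      simpa [Equiv.Perm.mul_apply] using this
    have hxne : σ x ≠ x := by
      rw [h1']; exact Equiv.Perm.mem_support.mp hx
    have hsq : (σ * σ) x = x := by
      simp [Equiv.Perm.mul_apply, h1', h2', hcc]
    have hsq' : σ (σ x) = x := hsq
    simp [hB, hA, hF, hsq, hsq', hxne]
    exact Finset.mem_filter.mpr ⟨Finset.mem_univ _, hsq'⟩
  -- Step 3 : 2 * T.card ≤ B.card
  have h2 : 2 * T.card ≤ B.card := by
    have hdisj : ∀ c₁ ∈ T, ∀ c₂ ∈ T, c₁ ≠ c₂ → Disjoint c₁.support c₂.support := by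
      intro c₁ h₁ c₂ h₂ hne
      exact (Equiv.Perm.cycleFactorsFinset_pairwise_disjoint σ
        (Finset.mem_filter.mp h₁).1 (Finset.mem_filter.mp h₂).1 hne).disjoint_support
    have hcardU : (T.biUnion Equiv.Perm.support).card = ∑ c ∈ T, c.support.card :=
      Finset.card_biUnion hdisj
    have hUB : T.biUnion Equiv.Perm.support ⊆ B := by
      intro x hx
      obtain ⟨c, hc, hxc⟩ := Finset.mem_biUnion.mp hx
      exact hsub c hc hxc
    calc 2 * T.card = ∑ c ∈ T, c.support.card := by
          rw [Finset.sum_congr rfl fun c hc => (Finset.mem_filter.mp hc).2,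
            Finset.sum_const, smul_eq_mul, mul_comm]
      _ = (T.biUnion Equiv.Perm.support).card := hcardU.symm
      _ ≤ B.card := Finset.card_le_card hUB
  -- A = F ∪ B with F ⊆ A
  have hFA : F ⊆ A := by
    intro x hx
    have : σ x = x := (Finset.mem_filter.mp hx).2
    simp [hA, Equiv.Perm.mul_apply, this]
    exact Finset.mem_filter.mpr ⟨Finset.mem_univ _, by rw [this, this]⟩
  have hAcard : A.card = F.card + B.card := by
    have h := Finset.card_sdiff_add_card_eq_card hFA
    rw [← hB] at h
    omega
  -- n = F.card + S
  have hn : n = F.card + S := by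
    have h1' : S = σ.support.card := by rw [hS, Equiv.Perm.sum_cycleType]
    have hFle : F.card ≤ n := by simpa using Finset.card_le_univ F
    have h2' : F.card + σ.support.card = n := by
      have heq : σ.support = Finset.univ \ F := by
        ext x; simp [hF, Equiv.Perm.mem_support]
      rw [heq, Finset.card_sdiff_of_subset (Finset.subset_univ F), Finset.card_univ, Fintype.card_fin]
      omega
    omega
  -- unfold the defs
  have hNC : numCycles σ = m + F.card := rfl
  have hNF : numFixedPoints σ = F.card := rfl
  have hNF2 : numFixedPoints (σ * σ) = A.card := rfl
  rw [hNC, hNF, hNF2]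
  have := h1
  have := h2
  omega
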